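/- With q̂, p̂ in an associative ℝ-algebra and the VI^ℏ structure constants μ̂₂₃¹ = p̂/p₀, μ̂₂₃² = ωq̂/p₀, μ̂₃₁¹ = ωq̂/p₀, μ̂₃₁² = −p̂/p₀, others zero, the quantum Jacobian vanishes identically, without using any commutation relation between q̂ and p̂. -/
import Mathlib


/-- Antisymmetric bracket on the rank-3 free module over an ℝ-algebra `A`,
defined by structure constants `m i j k ∈ A`. -/
noncomputable def qbkt {A : Type*} [Ring A] [Algebra ℝ A]
    (m : Fin 3 → Fin 3 → Fin 3 → A) (x y : Fin 3 → A) : Fin 3 → A :=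
  fun k => ∑ i : Fin 3, ∑ j : Fin 3, x i * y j * m i j k

/-- The quantum Jacobian `Ĵ(x,y,z) = [[x,y],z] + [[y,z],x] + [[z,x],y]`. -/
noncomputable def qjac {A : Type*} [Ring A] [Algebra ℝ A]
    (m : Fin 3 → Fin 3 → Fin 3 → A) (x y z : Fin 3 → A) : Fin 3 → A :=
  qbkt m (qbkt m x y) z + qbkt m (qbkt m y z) x + qbkt m (qbkt m z x) y

/-- Structure constants of the quantum algebra VI^ℏ:
`μ̂₂₃¹ = p̂/p₀`, `μ̂₂₃² = ωq̂/p₀`, `μ̂₃₁¹ = ωq̂/p₀`, `μ̂₃₁² = −p̂/p₀`. -/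
noncomputable def muVIh {A : Type*} [Ring A] [Algebra ℝ A]
    (qh ph : A) (ω p₀ : ℝ) : Fin 3 → Fin 3 → Fin 3 → A :=
  ![![![0, 0, 0], ![0, 0, 0], ![-(p₀⁻¹ • (ω • qh)), p₀⁻¹ • ph, 0]],
    ![![0, 0, 0], ![0, 0, 0], ![p₀⁻¹ • ph, p₀⁻¹ • (ω • qh), 0]],
    ![![p₀⁻¹ • (ω • qh), -(p₀⁻¹ • ph), 0], ![-(p₀⁻¹ • ph), -(p₀⁻¹ • (ω • qh)), 0],
      ![0, 0, 0]]]

lemma qbkt_basis {A : Type*} [Ring A] [Algebra ℝ A]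
    (m : Fin 3 → Fin 3 → Fin 3 → A) (i j : Fin 3) :
    qbkt m (fun l => if l = i then 1 else 0) (fun l => if l = j then 1 else 0) = m i j := by
  funext k
  simp [qbkt, ite_mul, one_mul, zero_mul, Finset.sum_ite_eq]

lemma qbkt_basis_right {A : Type*} [Ring A] [Algebra ℝ A]
    (m : Fin 3 → Fin 3 → Fin 3 → A) (x : Fin 3 → A) (k l : Fin 3) :
    qbkt m x (fun l => if l = k then 1 else 0) l = ∑ a : Fin 3, x a * m a k l := by
  simp [qbkt, mul_ite, mul_one, mul_zero, ite_mul, zero_mul, Finset.sum_ite_eq]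

/-- The quantum algebra VI^ℏ satisfies the Jacobi identity on all basis triples,
without assuming any commutation relation between `q̂` and `p̂`. -/
theorem VIh_jacobi {A : Type*} [Ring A] [Algebra ℝ A]
    (qh ph : A) (ω p₀ : ℝ) (hp₀ : p₀ ≠ 0) :
    ∀ i j k : Fin 3,
      qjac (muVIh qh ph ω p₀)
        (fun l => if l = i then 1 else 0)
        (fun l => if l = j then 1 else 0)
        (fun l => if l = k then 1 else 0) = 0 := by
  intro i j k
  funext l
  simp only [qjac, Pi.add_apply, Pi.zero_apply, qbkt_basis, qbkt_basis_right]
  fin_cases i <;> fin_cases j <;> fin_cases k <;> fin_cases l <;>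
    simp [muVIh, Fin.sum_univ_three] <;> abel
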